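/- Fix m ≥ 1 and distributions P^1,…,P^m ∈ P_2(Θ) with Θ ⊂ R^d. If for each j the empirical measures satisfy W_2(P^j_{n_j}, P^j) → 0 almost surely as n_j → ∞, then inf f_{n⃗}(G⃗, H) − inf f(G⃗, H) → 0 almost surely as all n_j → ∞, where f_{n⃗}(G⃗,H) = Σ_j W_2^2(G_j, P^j_{n_j}) + λ W_2^2(H, (1/m)Σ_j δ_{G_j}), f is the same with P^j replacing P^j_{n_j}, and the infima are taken over G_j ∈ O_{k_j}(Θ) and H ∈ E_M(P_2(Θ)). -/

import Mathlib

open MeasureTheory ENNReal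

/-- The set of couplings of two measures: probability measures on the product
with the prescribed marginals. -/
def couplings {α : Type*} [MeasurableSpace α] (μ ν : Measure α) :
    Set (Measure (α × α)) :=
  {π | IsProbabilityMeasure π ∧ π.map Prod.fst = μ ∧ π.map Prod.snd = ν}

/-- Optimal transport cost between two measures for a cost function `c`. -/
noncomputable def Wcost {α : Type*} [MeasurableSpace α] (c : α → α → ℝ≥0∞)
    (μ ν : Measure α) : ℝ≥0∞ :=
  ⨅ π ∈ couplings μ ν, ∫⁻ p, c p.1 p.2 ∂π

/-- Squared second-order Wasserstein distance. -/
noncomputable def W2sq {α : Type*} [MeasurableSpace α] [PseudoMetricSpace α]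
    (μ ν : Measure α) : ℝ≥0∞ :=
  Wcost (fun x y => ENNReal.ofReal (dist x y ^ 2)) μ ν

/-- `O_k(Θ)`: probability measures with at most `k` support points, all in `Θ`. -/
def OkSet {α : Type*} [MeasurableSpace α] (Θ : Set α) (k : ℕ) : Set (Measure α) :=
  {G | IsProbabilityMeasure G ∧
    ∃ s : Finset α, ↑s ⊆ Θ ∧ s.card ≤ k ∧ G ((↑s : Set α))ᶜ = 0}

/-- `E_M(P_2(Θ))`: probability measures on the space of measures, supported on exactly
`M` atoms, each atom being a probability measure supported in `Θ`. -/
def EMSet {α : Type*} [MeasurableSpace α] (Θ : Set α) (M : ℕ) :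
    Set (Measure (Measure α)) :=
  {H | IsProbabilityMeasure H ∧
    ∃ (a : Fin M → Measure α) (w : Fin M → ℝ≥0∞),
      Function.Injective a ∧ (∀ i, w i ≠ 0) ∧
      (∀ i, IsProbabilityMeasure (a i) ∧ (a i) Θᶜ = 0) ∧
      H = ∑ i, w i • Measure.dirac (a i)}

/-- The MWM objective with data measures `P j`: `Σ_j W_2²(G_j, P_j) + λ W_2²(H, (1/m)Σ_j δ_{G_j})`,
infimized over `G_j ∈ O_{k_j}(Θ)` and `H ∈ E_M(P_2(Θ))`. Here the outer `W_2²` uses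
ground cost `W2sq`. -/
noncomputable def mwmInf {α : Type*} [MeasurableSpace α] [PseudoMetricSpace α]
    (Θ : Set α) (m : ℕ) (k : Fin m → ℕ) (M : ℕ) (lam : ℝ)
    (P : Fin m → Measure α) : ℝ≥0∞ :=
  ⨅ G ∈ {G : Fin m → Measure α | ∀ j, G j ∈ OkSet Θ (k j)},
  ⨅ H ∈ EMSet Θ M,
    (∑ j, W2sq (G j) (P j)) +
      ENNReal.ofReal lam *
        Wcost (fun μ ν => W2sq μ ν) H ((m : ℝ≥0∞)⁻¹ • ∑ j, Measure.dirac (G j))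


section MWMAux

open ProbabilityTheory
open scoped ProbabilityTheory

variable {X : Type*} [MeasurableSpace X] [PseudoMetricSpace X]

private lemma W2sq_eq_edist (μ ν : Measure X) :
    W2sq μ ν = ⨅ π ∈ couplings μ ν, ∫⁻ p, edist p.1 p.2 ^ (2 : ℝ) ∂π := by
  unfold W2sq Wcost
  refine iInf_congr fun π => iInf_congr fun _ => lintegral_congr fun p => ?_
  show ENNReal.ofReal (dist p.1 p.2 ^ 2) = edist p.1 p.2 ^ (2 : ℝ)
  rw [ENNReal.ofReal_pow dist_nonneg, ← edist_dist, ← ENNReal.rpow_natCast]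
  norm_num

private lemma cost2_measurable [OpensMeasurableSpace X] [SecondCountableTopology X] :
    Measurable fun p : X × X => edist p.1 p.2 ^ (2 : ℝ) :=
  measurable_edist.pow_const _

private lemma prod_mem_couplings (μ ν : Measure X) [IsProbabilityMeasure μ]
    [IsProbabilityMeasure ν] : μ.prod ν ∈ couplings μ ν := by
  refine ⟨inferInstance, ?_, ?_⟩ <;> simp

private lemma swap_mem_couplings {μ ν : Measure X} {π : Measure (X × X)}
    (hπ : π ∈ couplings μ ν) : π.map Prod.swap ∈ couplings ν μ := by
  obtain ⟨h1, h2, h3⟩ := hπ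
  haveI := h1
  have hfs : (Prod.fst ∘ Prod.swap : X × X → X) = Prod.snd := rfl
  have hss : (Prod.snd ∘ Prod.swap : X × X → X) = Prod.fst := rfl
  refine ⟨Measure.isProbabilityMeasure_map measurable_swap.aemeasurable, ?_, ?_⟩
  · rw [Measure.map_map measurable_fst measurable_swap, hfs]; exact h3
  · rw [Measure.map_map measurable_snd measurable_swap, hss]; exact h2

private lemma W2sq_symm' [OpensMeasurableSpace X] [SecondCountableTopology X]
    (μ ν : Measure X) : W2sq μ ν = W2sq ν μ := by
  suffices h : ∀ α β : Measure X, W2sq α β ≤ W2sq β α from le_antisymm (h μ ν) (h ν μ)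
  intro α β
  rw [W2sq_eq_edist, W2sq_eq_edist]
  refine le_iInf₂ fun π hπ => ?_
  refine le_trans (iInf₂_le (π.map Prod.swap) (swap_mem_couplings hπ)) ?_
  rw [lintegral_map cost2_measurable measurable_swap]
  exact le_of_eq (lintegral_congr fun p => by rw [edist_comm]; rfl)

private lemma lintegral_cost_le_diam [OpensMeasurableSpace X] {Θ : Set X} (hΘ : IsCompact Θ)
    {π : Measure (X × X)} (hπ : IsProbabilityMeasure π) (h0 : π ((Θ ×ˢ Θ)ᶜ) = 0) :
    ∫⁻ p, edist p.1 p.2 ^ (2 : ℝ) ∂π ≤ ENNReal.ofReal (Metric.diam Θ) ^ (2 : ℝ) := by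
  have hae : ∀ᵐ p ∂π, p ∈ Θ ×ˢ Θ := by
    rw [ae_iff]
    exact h0
  calc ∫⁻ p, edist p.1 p.2 ^ (2 : ℝ) ∂π
      ≤ ∫⁻ _, ENNReal.ofReal (Metric.diam Θ) ^ (2 : ℝ) ∂π := by
        refine lintegral_mono_ae (hae.mono fun p hp => ?_)
        refine ENNReal.rpow_le_rpow ?_ (by norm_num)
        rw [edist_dist]
        exact ENNReal.ofReal_le_ofReal
          (Metric.dist_le_diam_of_mem hΘ.isBounded hp.1 hp.2)
    _ = ENNReal.ofReal (Metric.diam Θ) ^ (2 : ℝ) := by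
        rw [lintegral_const, measure_univ, mul_one]

private lemma W2sq_le_diam [OpensMeasurableSpace X] {Θ : Set X} (hΘ : IsCompact Θ)
    {μ ν : Measure X} (hμ : IsProbabilityMeasure μ) (hν : IsProbabilityMeasure ν)
    (hμΘ : μ Θᶜ = 0) (hνΘ : ν Θᶜ = 0) :
    W2sq μ ν ≤ ENNReal.ofReal (Metric.diam Θ) ^ (2 : ℝ) := by
  haveI := hμ; haveI := hν
  rw [W2sq_eq_edist]
  refine le_trans (iInf₂_le (μ.prod ν) (prod_mem_couplings μ ν))
    (lintegral_cost_le_diam hΘ inferInstance ?_)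
  have hsub : (Θ ×ˢ Θ)ᶜ ⊆ (Θᶜ ×ˢ (Set.univ : Set X)) ∪ ((Set.univ : Set X) ×ˢ Θᶜ) := by
    intro p hp
    by_cases h1 : p.1 ∈ Θ
    · exact Or.inr ⟨trivial, fun h2 => hp ⟨h1, h2⟩⟩
    · exact Or.inl ⟨h1, trivial⟩
  refine measure_mono_null hsub (measure_union_null ?_ ?_) <;>
    rw [Measure.prod_prod] <;> simp [hμΘ, hνΘ]

private lemma rpow_half_sq (x : ℝ≥0∞) : (x ^ (1 / 2 : ℝ)) ^ (2 : ℕ) = x := by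
  rw [← ENNReal.rpow_natCast, ← ENNReal.rpow_mul]
  norm_num

private lemma W2_le_diam [OpensMeasurableSpace X] {Θ : Set X} (hΘ : IsCompact Θ)
    {μ ν : Measure X} (hμ : IsProbabilityMeasure μ) (hν : IsProbabilityMeasure ν)
    (hμΘ : μ Θᶜ = 0) (hνΘ : ν Θᶜ = 0) :
    (W2sq μ ν) ^ (1 / 2 : ℝ) ≤ ENNReal.ofReal (Metric.diam Θ) := by
  calc (W2sq μ ν) ^ (1 / 2 : ℝ)
      ≤ (ENNReal.ofReal (Metric.diam Θ) ^ (2 : ℝ)) ^ (1 / 2 : ℝ) :=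
        ENNReal.rpow_le_rpow (W2sq_le_diam hΘ hμ hν hμΘ hνΘ) (by norm_num)
    _ = ENNReal.ofReal (Metric.diam Θ) := by
        rw [← ENNReal.rpow_mul]; norm_num

/-- Gluing two couplings along the common marginal, with Minkowski's inequality. -/
private lemma exists_glue [OpensMeasurableSpace X] [SecondCountableTopology X]
    [StandardBorelSpace X] [Nonempty X]
    {μ ν ρ : Measure X} {π₁ π₂ : Measure (X × X)}
    (h₁ : π₁ ∈ couplings μ ν) (h₂ : π₂ ∈ couplings ν ρ) :
    ∃ π ∈ couplings μ ρ,
      (∫⁻ p, edist p.1 p.2 ^ (2 : ℝ) ∂π) ^ (1 / 2 : ℝ) ≤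
        (∫⁻ p, edist p.1 p.2 ^ (2 : ℝ) ∂π₁) ^ (1 / 2 : ℝ) +
          (∫⁻ p, edist p.1 p.2 ^ (2 : ℝ) ∂π₂) ^ (1 / 2 : ℝ) := by
  obtain ⟨hπ₁, hπ₁f, hπ₁s⟩ := h₁
  obtain ⟨hπ₂, hπ₂f, hπ₂s⟩ := h₂
  haveI := hπ₁; haveI := hπ₂
  haveI : IsProbabilityMeasure ν := by
    rw [← hπ₁s]; exact Measure.isProbabilityMeasure_map measurable_snd.aemeasurable
  set σ : Measure (X × X) := π₁.map Prod.swap with hσdef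
  haveI : IsProbabilityMeasure σ := Measure.isProbabilityMeasure_map measurable_swap.aemeasurable
  have hσfst : σ.fst = ν := by
    rw [hσdef, Measure.fst_map_swap]
    exact hπ₁s
  have hπ₂fst : π₂.fst = ν := hπ₂f
  have hμσ : σ.map Prod.snd = μ := by
    have hss : (Prod.snd ∘ Prod.swap : X × X → X) = Prod.fst := rfl
    rw [hσdef, Measure.map_map measurable_snd measurable_swap, hss]
    exact hπ₁f
  set κ₁ := σ.condKernel with hκ₁def
  set κ₂ := π₂.condKernel with hκ₂def
  have hd₁ : ν ⊗ₘ κ₁ = σ := by rw [← hσfst]; exact σ.disintegrate σ.condKernel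
  have hd₂ : ν ⊗ₘ κ₂ = π₂ := by rw [← hπ₂fst]; exact π₂.disintegrate π₂.condKernel
  set κ : Kernel X (X × X) := κ₁ ×ₖ κ₂ with hκdef
  set γ : Measure (X × (X × X)) := ν ⊗ₘ κ with hγdef
  haveI : IsProbabilityMeasure γ := by rw [hγdef]; infer_instance
  have hκapp : ∀ y, κ y = (κ₁ y).prod (κ₂ y) := fun y => Kernel.prod_apply _ _ _
  refine ⟨γ.map Prod.snd, ⟨Measure.isProbabilityMeasure_map measurable_snd.aemeasurable, ?_, ?_⟩, ?_⟩
  · -- first marginal is μ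
    rw [Measure.map_map measurable_fst measurable_snd]
    ext s hs
    have hms : MeasurableSet ((Prod.fst ∘ Prod.snd : X × X × X → X) ⁻¹' s) :=
      (measurable_fst.comp measurable_snd) hs
    rw [Measure.map_apply (measurable_fst.comp measurable_snd) hs,
      hγdef, Measure.compProd_apply hms]
    have hre : ∀ y : X, κ y (Prod.mk y ⁻¹' ((Prod.fst ∘ Prod.snd : X × X × X → X) ⁻¹' s))
        = κ₁ y s := by
      intro y
      have : Prod.mk y ⁻¹' ((Prod.fst ∘ Prod.snd : X × X × X → X) ⁻¹' s)
          = s ×ˢ Set.univ := by ext q; simp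
      rw [this, hκapp, Measure.prod_prod, measure_univ, mul_one]
    simp_rw [hre]
    rw [← hμσ, Measure.map_apply measurable_snd hs, ← hd₁,
      Measure.compProd_apply (measurable_snd hs)]
    rfl
  · -- second marginal is ρ
    rw [Measure.map_map measurable_snd measurable_snd]
    ext s hs
    have hms : MeasurableSet ((Prod.snd ∘ Prod.snd : X × X × X → X) ⁻¹' s) :=
      (measurable_snd.comp measurable_snd) hs
    rw [Measure.map_apply (measurable_snd.comp measurable_snd) hs,
      hγdef, Measure.compProd_apply hms]
    have hre : ∀ y : X, κ y (Prod.mk y ⁻¹' ((Prod.snd ∘ Prod.snd : X × X × X → X) ⁻¹' s))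
        = κ₂ y s := by
      intro y
      have : Prod.mk y ⁻¹' ((Prod.snd ∘ Prod.snd : X × X × X → X) ⁻¹' s)
          = Set.univ ×ˢ s := by ext q; simp
      rw [this, hκapp, Measure.prod_prod, measure_univ, one_mul]
    simp_rw [hre]
    rw [← hπ₂s, Measure.map_apply measurable_snd hs, ← hd₂,
      Measure.compProd_apply (measurable_snd hs)]
    rfl
  · -- cost bound via Minkowski
    have hmF : Measurable fun q : X × X × X => edist q.2.1 q.1 :=
      ((measurable_fst.comp measurable_snd).edist measurable_fst)
    have hmG : Measurable fun q : X × X × X => edist q.1 q.2.2 :=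
      (measurable_fst.edist (measurable_snd.comp measurable_snd))
    have hcost : ∫⁻ p, edist p.1 p.2 ^ (2 : ℝ) ∂(γ.map Prod.snd)
        = ∫⁻ q, edist q.2.1 q.2.2 ^ (2 : ℝ) ∂γ := by
      rw [lintegral_map cost2_measurable measurable_snd]
    have hA : ∫⁻ q, edist q.2.1 q.1 ^ (2 : ℝ) ∂γ
        = ∫⁻ p, edist p.1 p.2 ^ (2 : ℝ) ∂π₁ := by
      rw [hγdef, Measure.lintegral_compProd (hmF.pow_const _)]
      have hin : ∀ y, ∫⁻ q : X × X, edist q.1 y ^ (2 : ℝ) ∂(κ y)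
          = ∫⁻ x, edist x y ^ (2 : ℝ) ∂(κ₁ y) := by
        intro y
        rw [hκapp, lintegral_prod (fun q : X × X => edist q.1 y ^ (2 : ℝ))
          ((measurable_edist_left.comp measurable_fst).pow_const _).aemeasurable]
        simp
      simp_rw [hin]
      have := Measure.lintegral_compProd (μ := ν) (κ := κ₁)
        (f := fun p : X × X => edist p.2 p.1 ^ (2 : ℝ))
        ((measurable_snd.edist measurable_fst).pow_const _)
      rw [← this, hd₁, hσdef, lintegral_map
        ((measurable_snd.edist measurable_fst).pow_const _) measurable_swap]
      rfl
    have hB : ∫⁻ q, edist q.1 q.2.2 ^ (2 : ℝ) ∂γ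
        = ∫⁻ p, edist p.1 p.2 ^ (2 : ℝ) ∂π₂ := by
      rw [hγdef, Measure.lintegral_compProd (hmG.pow_const _)]
      have hin : ∀ y, ∫⁻ q : X × X, edist y q.2 ^ (2 : ℝ) ∂(κ y)
          = ∫⁻ z, edist y z ^ (2 : ℝ) ∂(κ₂ y) := by
        intro y
        rw [hκapp, lintegral_prod (fun q : X × X => edist y q.2 ^ (2 : ℝ))
          ((measurable_edist_right.comp measurable_snd).pow_const _).aemeasurable]
        simp
      simp_rw [hin]
      have := Measure.lintegral_compProd (μ := ν) (κ := κ₂)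
        (f := fun p : X × X => edist p.1 p.2 ^ (2 : ℝ)) cost2_measurable
      rw [← this, hd₂]
    rw [hcost]
    calc (∫⁻ q, edist q.2.1 q.2.2 ^ (2 : ℝ) ∂γ) ^ (1 / 2 : ℝ)
        ≤ (∫⁻ q, ((fun q : X × X × X => edist q.2.1 q.1) +
            fun q : X × X × X => edist q.1 q.2.2) q ^ (2 : ℝ) ∂γ) ^ (1 / 2 : ℝ) := by
          refine ENNReal.rpow_le_rpow (lintegral_mono fun q => ?_) (by norm_num)
          exact ENNReal.rpow_le_rpow (edist_triangle _ _ _) (by norm_num)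
      _ ≤ (∫⁻ q, edist q.2.1 q.1 ^ (2 : ℝ) ∂γ) ^ (1 / 2 : ℝ) +
            (∫⁻ q, edist q.1 q.2.2 ^ (2 : ℝ) ∂γ) ^ (1 / 2 : ℝ) :=
          ENNReal.lintegral_Lp_add_le hmF.aemeasurable hmG.aemeasurable one_le_two
      _ = _ := by rw [hA, hB]

private lemma W2_triangle [OpensMeasurableSpace X] [SecondCountableTopology X]
    [StandardBorelSpace X] [Nonempty X]
    {μ ν ρ : Measure X} (hμ : IsProbabilityMeasure μ) (hν : IsProbabilityMeasure ν)
    (hρ : IsProbabilityMeasure ρ) :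
    (W2sq μ ρ) ^ (1 / 2 : ℝ) ≤ (W2sq μ ν) ^ (1 / 2 : ℝ) + (W2sq ν ρ) ^ (1 / 2 : ℝ) := by
  by_cases hA : W2sq μ ν = ⊤
  · rw [hA, ENNReal.top_rpow_of_pos (by norm_num), top_add]; exact le_top
  by_cases hB : W2sq ν ρ = ⊤
  · rw [hB, ENNReal.top_rpow_of_pos (by norm_num), add_top]; exact le_top
  refine ENNReal.le_of_forall_pos_le_add fun ε hε _ => ?_
  set δ : ℝ≥0∞ := ((ε : ℝ≥0∞) / 2) ^ (2 : ℕ) with hδdef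
  have hδ0 : δ ≠ 0 := by
    apply pow_ne_zero
    simp only [ne_eq, ENNReal.div_eq_zero_iff, not_or]
    exact ⟨by exact_mod_cast hε.ne', by norm_num⟩
  have hδhalf : δ ^ (1 / 2 : ℝ) = (ε : ℝ≥0∞) / 2 := by
    rw [hδdef, ← ENNReal.rpow_natCast, ← ENNReal.rpow_mul]
    norm_num
  obtain ⟨π₁, hπ₁m, hπ₁c⟩ : ∃ π ∈ couplings μ ν,
      ∫⁻ p, edist p.1 p.2 ^ (2 : ℝ) ∂π < W2sq μ ν + δ := by
    have hlt : (⨅ π ∈ couplings μ ν, ∫⁻ p, edist p.1 p.2 ^ (2 : ℝ) ∂π) < W2sq μ ν + δ := by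
      rw [← W2sq_eq_edist]; exact ENNReal.lt_add_right hA hδ0
    simp only [iInf_lt_iff] at hlt
    obtain ⟨π, hm, hc⟩ := hlt
    exact ⟨π, hm, hc⟩
  obtain ⟨π₂, hπ₂m, hπ₂c⟩ : ∃ π ∈ couplings ν ρ,
      ∫⁻ p, edist p.1 p.2 ^ (2 : ℝ) ∂π < W2sq ν ρ + δ := by
    have hlt : (⨅ π ∈ couplings ν ρ, ∫⁻ p, edist p.1 p.2 ^ (2 : ℝ) ∂π) < W2sq ν ρ + δ := by
      rw [← W2sq_eq_edist]; exact ENNReal.lt_add_right hB hδ0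
    simp only [iInf_lt_iff] at hlt
    obtain ⟨π, hm, hc⟩ := hlt
    exact ⟨π, hm, hc⟩
  obtain ⟨π, hπ, hπcost⟩ := exists_glue hπ₁m hπ₂m
  calc (W2sq μ ρ) ^ (1 / 2 : ℝ)
      ≤ (∫⁻ p, edist p.1 p.2 ^ (2 : ℝ) ∂π) ^ (1 / 2 : ℝ) := by
        refine ENNReal.rpow_le_rpow ?_ (by norm_num)
        rw [W2sq_eq_edist]; exact iInf₂_le π hπ
    _ ≤ (∫⁻ p, edist p.1 p.2 ^ (2 : ℝ) ∂π₁) ^ (1 / 2 : ℝ) +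
          (∫⁻ p, edist p.1 p.2 ^ (2 : ℝ) ∂π₂) ^ (1 / 2 : ℝ) := hπcost
    _ ≤ (W2sq μ ν + δ) ^ (1 / 2 : ℝ) + (W2sq ν ρ + δ) ^ (1 / 2 : ℝ) :=
        add_le_add (ENNReal.rpow_le_rpow hπ₁c.le (by norm_num))
          (ENNReal.rpow_le_rpow hπ₂c.le (by norm_num))
    _ ≤ ((W2sq μ ν) ^ (1 / 2 : ℝ) + δ ^ (1 / 2 : ℝ)) +
          ((W2sq ν ρ) ^ (1 / 2 : ℝ) + δ ^ (1 / 2 : ℝ)) :=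
        add_le_add (ENNReal.rpow_add_le_add_rpow _ _ (by norm_num) (by norm_num))
          (ENNReal.rpow_add_le_add_rpow _ _ (by norm_num) (by norm_num))
    _ = (W2sq μ ν) ^ (1 / 2 : ℝ) + (W2sq ν ρ) ^ (1 / 2 : ℝ) +
          (δ ^ (1 / 2 : ℝ) + δ ^ (1 / 2 : ℝ)) := by ring
    _ = (W2sq μ ν) ^ (1 / 2 : ℝ) + (W2sq ν ρ) ^ (1 / 2 : ℝ) + ε := by
        rw [hδhalf, ENNReal.add_halves]

private lemma W2sq_perturb [OpensMeasurableSpace X] [SecondCountableTopology X]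
    [StandardBorelSpace X] [Nonempty X] {Θ : Set X} (hΘ : IsCompact Θ)
    {μ ν ρ : Measure X}
    (hμp : IsProbabilityMeasure μ) (hμ0 : μ Θᶜ = 0)
    (hνp : IsProbabilityMeasure ν) (hν0 : ν Θᶜ = 0)
    (hρp : IsProbabilityMeasure ρ) (hρ0 : ρ Θᶜ = 0) :
    W2sq μ ρ ≤ W2sq μ ν +
      (2 * ENNReal.ofReal (Metric.diam Θ) * (W2sq ν ρ) ^ (1 / 2 : ℝ) +
        ((W2sq ν ρ) ^ (1 / 2 : ℝ)) ^ (2 : ℕ)) := by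
  set D := ENNReal.ofReal (Metric.diam Θ) with hD
  set a := (W2sq μ ν) ^ (1 / 2 : ℝ) with hadef
  set s := (W2sq ν ρ) ^ (1 / 2 : ℝ) with hsdef
  have hμρ : W2sq μ ρ ≤ (a + s) ^ (2 : ℕ) := by
    rw [← rpow_half_sq (W2sq μ ρ)]
    exact pow_le_pow_left₀ (zero_le (a := (W2sq μ ρ) ^ (1 / 2 : ℝ))) (W2_triangle hμp hνp hρp) 2
  have ha : a ≤ D := W2_le_diam hΘ hμp hνp hμ0 hν0
  calc W2sq μ ρ ≤ (a + s) ^ (2 : ℕ) := hμρ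
    _ = a ^ (2 : ℕ) + 2 * a * s + s ^ (2 : ℕ) := add_sq a s
    _ = W2sq μ ν + (2 * a * s + s ^ (2 : ℕ)) := by rw [hadef, rpow_half_sq]; ring
    _ ≤ W2sq μ ν + (2 * D * s + s ^ (2 : ℕ)) := by
        gcongr

private lemma mwmInf_perturb [OpensMeasurableSpace X] [SecondCountableTopology X]
    [StandardBorelSpace X] [Nonempty X] {Θ : Set X} (hΘ : IsCompact Θ)
    (m : ℕ) (k : Fin m → ℕ) (M : ℕ) (lam : ℝ) {P Q : Fin m → Measure X}
    (hP : ∀ j, IsProbabilityMeasure (P j) ∧ P j Θᶜ = 0)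
    (hQ : ∀ j, IsProbabilityMeasure (Q j) ∧ Q j Θᶜ = 0) :
    mwmInf Θ m k M lam Q ≤ mwmInf Θ m k M lam P +
      ∑ j, (2 * ENNReal.ofReal (Metric.diam Θ) * (W2sq (P j) (Q j)) ^ (1 / 2 : ℝ) +
        ((W2sq (P j) (Q j)) ^ (1 / 2 : ℝ)) ^ (2 : ℕ)) := by
  set E := ∑ j, (2 * ENNReal.ofReal (Metric.diam Θ) * (W2sq (P j) (Q j)) ^ (1 / 2 : ℝ) +
    ((W2sq (P j) (Q j)) ^ (1 / 2 : ℝ)) ^ (2 : ℕ)) with hEdef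
  by_cases htop : mwmInf Θ m k M lam P = ⊤
  · rw [htop, top_add]; exact le_top
  refine ENNReal.le_of_forall_pos_le_add fun ε hε _ => ?_
  have hε' : (ε : ℝ≥0∞) ≠ 0 := by exact_mod_cast hε.ne'
  have hlt : mwmInf Θ m k M lam P < mwmInf Θ m k M lam P + ε :=
    ENNReal.lt_add_right htop hε'
  conv_lhs at hlt => rw [mwmInf]
  simp only [iInf_lt_iff, Set.mem_setOf_eq] at hlt
  obtain ⟨G, hG, H, hH, hfP⟩ := hlt
  have hQle : mwmInf Θ m k M lam Q ≤ (∑ j, W2sq (G j) (Q j)) +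
      ENNReal.ofReal lam *
        Wcost (fun μ ν => W2sq μ ν) H ((m : ℝ≥0∞)⁻¹ • ∑ j, Measure.dirac (G j)) := by
    rw [mwmInf]
    exact le_trans (iInf₂_le G hG) (iInf₂_le H hH)
  have hsum : ∑ j, W2sq (G j) (Q j) ≤ (∑ j, W2sq (G j) (P j)) + E := by
    rw [hEdef, ← Finset.sum_add_distrib]
    refine Finset.sum_le_sum fun j _ => ?_
    obtain ⟨hGp, t, htΘ, -, ht0⟩ := hG j
    have hGΘ : G j Θᶜ = 0 := measure_mono_null (Set.compl_subset_compl.mpr htΘ) ht0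
    exact W2sq_perturb hΘ hGp hGΘ (hP j).1 (hP j).2 (hQ j).1 (hQ j).2
  calc mwmInf Θ m k M lam Q
      ≤ (∑ j, W2sq (G j) (Q j)) + ENNReal.ofReal lam *
          Wcost (fun μ ν => W2sq μ ν) H ((m : ℝ≥0∞)⁻¹ • ∑ j, Measure.dirac (G j)) := hQle
    _ ≤ ((∑ j, W2sq (G j) (P j)) + E) + ENNReal.ofReal lam *
          Wcost (fun μ ν => W2sq μ ν) H ((m : ℝ≥0∞)⁻¹ • ∑ j, Measure.dirac (G j)) := by
        gcongr
    _ = ((∑ j, W2sq (G j) (P j)) + ENNReal.ofReal lam *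
          Wcost (fun μ ν => W2sq μ ν) H ((m : ℝ≥0∞)⁻¹ • ∑ j, Measure.dirac (G j))) + E := by
        ring
    _ ≤ (mwmInf Θ m k M lam P + ε) + E := add_le_add_left hfP.le E
    _ = mwmInf Θ m k M lam P + E + ε := by ring

end MWMAux

open Filter

/-- Theorem 4(i): if the empirical measures converge to the truths in
`W_2` almost surely, then the optimal value of the empirical MWM objective converges
almost surely to the optimal value of the population objective as all `n_j → ∞`. -/
theorem mwm_objective_consistency {d : ℕ} {Ω : Type*} [MeasurableSpace Ω]
    (Pr : Measure Ω) [IsProbabilityMeasure Pr]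
    (Θ : Set (EuclideanSpace ℝ (Fin d))) (hΘ : IsCompact Θ) (hΘne : Θ.Nonempty)
    (m : ℕ) (hm : 1 ≤ m) (k : Fin m → ℕ) (hk : ∀ j, 1 ≤ k j)
    (M : ℕ) (hM : 1 ≤ M) (lam : ℝ) (hlam : 0 < lam)
    (P : Fin m → Measure (EuclideanSpace ℝ (Fin d)))
    (hP : ∀ j, IsProbabilityMeasure (P j) ∧ (P j) Θᶜ = 0)
    (Pn : Fin m → ℕ → Ω → Measure (EuclideanSpace ℝ (Fin d)))
    (hPn : ∀ j n ω, IsProbabilityMeasure (Pn j n ω) ∧ (Pn j n ω) Θᶜ = 0)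
    (hconv : ∀ j, ∀ᵐ ω ∂Pr,
      Tendsto (fun n => ((W2sq (Pn j n ω) (P j)) ^ (1 / 2 : ℝ)).toReal)
        atTop (nhds 0)) :
    ∀ᵐ ω ∂Pr,
      Tendsto
        (fun nv : Fin m → ℕ =>
          (mwmInf Θ m k M lam (fun j => Pn j (nv j) ω)).toReal -
            (mwmInf Θ m k M lam P).toReal)
        atTop (nhds 0) := by
  have hae : ∀ᵐ ω ∂Pr, ∀ j,
      Tendsto (fun n => ((W2sq (Pn j n ω) (P j)) ^ (1 / 2 : ℝ)).toReal)
        atTop (nhds 0) := ae_all_iff.2 hconv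
  filter_upwards [hae] with ω hω
  set D : ℝ := Metric.diam Θ with hDdef
  have hD0 : 0 ≤ D := Metric.diam_nonneg
  set t : (Fin m → ℕ) → Fin m → ℝ :=
    fun nv j => ((W2sq (Pn j (nv j) ω) (P j)) ^ (1 / 2 : ℝ)).toReal with htdef
  have htend : ∀ j, Tendsto (fun nv : Fin m → ℕ => t nv j) atTop (nhds 0) := by
    intro j
    have hj : Tendsto (fun nv : Fin m → ℕ => nv j) atTop atTop :=
      tendsto_atTop_atTop.mpr fun b => ⟨fun _ => b, fun nv h => h j⟩
    exact (hω j).comp hj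
  have hεt : Tendsto (fun nv : Fin m → ℕ => ∑ j, (2 * D * t nv j + t nv j ^ 2))
      atTop (nhds 0) := by
    have h0 : (0 : ℝ) = ∑ _j : Fin m, (2 * D * 0 + (0 : ℝ) ^ 2) := by simp
    rw [h0]
    exact tendsto_finset_sum _ fun j _ =>
      (((htend j).const_mul (2 * D)).add ((htend j).pow 2))
  refine squeeze_zero_norm (fun nv => ?_) hεt
  -- the deterministic bound for a fixed vector of sample sizes
  set Q : Fin m → Measure (EuclideanSpace ℝ (Fin d)) := fun j => Pn j (nv j) ω with hQdef
  have hQm : ∀ j, IsProbabilityMeasure (Q j) ∧ Q j Θᶜ = 0 := fun j => hPn j (nv j) ω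
  have hsymm : ∀ j, W2sq (P j) (Q j) = W2sq (Q j) (P j) := fun j => W2sq_symm' _ _
  set Dinf : ℝ≥0∞ := ENNReal.ofReal D with hDinfdef
  set s : Fin m → ℝ≥0∞ := fun j => (W2sq (P j) (Q j)) ^ (1 / 2 : ℝ) with hsdef
  set E : ℝ≥0∞ := ∑ j, (2 * Dinf * s j + s j ^ (2 : ℕ)) with hEdef
  have hsD : ∀ j, s j ≤ Dinf := fun j =>
    W2_le_diam hΘ (hP j).1 (hQm j).1 (hP j).2 (hQm j).2
  have hsne : ∀ j, s j ≠ ⊤ := fun j =>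
    ((hsD j).trans_lt ENNReal.ofReal_lt_top).ne
  have htermne : ∀ j, 2 * Dinf * s j + s j ^ (2 : ℕ) ≠ ⊤ := by
    intro j
    refine ENNReal.add_ne_top.2 ⟨?_, ?_⟩
    · exact ENNReal.mul_ne_top (ENNReal.mul_ne_top (by norm_num) ENNReal.ofReal_ne_top)
        (hsne j)
    · exact pow_ne_top (hsne j)
  have hEne : E ≠ ⊤ := by
    rw [hEdef]
    exact (ENNReal.sum_lt_top.mpr fun j _ => (htermne j).lt_top).ne
  have h1 : mwmInf Θ m k M lam Q ≤ mwmInf Θ m k M lam P + E :=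
    mwmInf_perturb hΘ m k M lam hP hQm
  have h2 : mwmInf Θ m k M lam P ≤ mwmInf Θ m k M lam Q + E := by
    have := mwmInf_perturb hΘ m k M lam hQm hP
    refine this.trans (le_of_eq ?_)
    congr 1
    exact Finset.sum_congr rfl fun j _ => by rw [← hsymm j]
  have hst : ∀ j, (s j).toReal = t nv j := by
    intro j
    rw [hsdef, htdef]
    simp only
    rw [hsymm j]
  have hEt : E.toReal = ∑ j, (2 * D * t nv j + t nv j ^ 2) := by
    rw [hEdef, ENNReal.toReal_sum fun j _ => htermne j]
    refine Finset.sum_congr rfl fun j _ => ?_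
    rw [ENNReal.toReal_add (ENNReal.mul_ne_top (ENNReal.mul_ne_top (by norm_num)
        ENNReal.ofReal_ne_top) (hsne j)) (pow_ne_top (hsne j)),
      ENNReal.toReal_mul, ENNReal.toReal_mul, ENNReal.toReal_pow, hst j,
      ENNReal.toReal_ofReal hD0]
    norm_num
  rw [← hEt, Real.norm_eq_abs]
  by_cases hPt : mwmInf Θ m k M lam P = ⊤
  · have hQt : mwmInf Θ m k M lam Q = ⊤ := by
      by_contra h
      have hfin : mwmInf Θ m k M lam Q + E < ⊤ :=
        ENNReal.add_lt_top.2 ⟨lt_top_iff_ne_top.2 h, lt_top_iff_ne_top.2 hEne⟩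
      exact absurd (h2.trans_lt hfin) (by simp [hPt])
    rw [hPt, hQt]
    simp [ENNReal.toReal_nonneg]
  · have hQt : mwmInf Θ m k M lam Q ≠ ⊤ := by
      intro h
      have hfin : mwmInf Θ m k M lam P + E < ⊤ :=
        ENNReal.add_lt_top.2 ⟨lt_top_iff_ne_top.2 hPt, lt_top_iff_ne_top.2 hEne⟩
      exact absurd (h1.trans_lt hfin) (by simp [h])
    have l1 : (mwmInf Θ m k M lam Q).toReal ≤
        (mwmInf Θ m k M lam P).toReal + E.toReal := by
      rw [← ENNReal.toReal_add hPt hEne]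
      exact ENNReal.toReal_mono (ENNReal.add_ne_top.2 ⟨hPt, hEne⟩) h1
    have l2 : (mwmInf Θ m k M lam P).toReal ≤
        (mwmInf Θ m k M lam Q).toReal + E.toReal := by
      rw [← ENNReal.toReal_add hQt hEne]
      exact ENNReal.toReal_mono (ENNReal.add_ne_top.2 ⟨hQt, hEne⟩) h2
    rw [abs_le]
    constructor <;> linarith
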